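/- Let s(t) = ∑ s_j t^j be a Castelnuovo polynomial of weight n ≥ 2 with parameter σ. Then c := ∑_j s_j(s_{j+1} - s_{j+2}) satisfies c ≥ 1, and c ≥ 2σ - 1 - δe₁ where δ = 1 if s_σ < σ and 0 otherwise, and e₁ is the first nonzero term of the sequence (s_{j+1}-s_{j+2})_{j ≥ σ-2}. In particular c = 1 if and only if σ = 1 and the sequence of drops has length 1, which holds iff s(t) = 1 + t + t² + ... + t^{n-1}. -/
import Mathlib

private lemma cast_mono_aux (s : ℤ → ℤ) (σ : ℤ)
    (hanti : ∀ i : ℤ, σ ≤ i → s (i + 1) ≤ s i)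
    (a b : ℤ) (ha : σ ≤ a) (hab : a ≤ b) : s b ≤ s a := by
  have key : ∀ N : ℕ, ∀ b : ℤ, b = a + N → s b ≤ s a := by
    intro N
    induction N with
    | zero => intro b hb; simp only [Nat.cast_zero, add_zero] at hb; rw [hb]
    | succ k ih =>
      intro b hb
      have hb' : b = (a + k) + 1 := by push_cast at hb; omega
      rw [hb']
      exact le_trans (hanti (a + k) (by omega)) (ih (a + k) rfl)
  exact key (b - a).toNat b (by omega)

private lemma cast_peel_aux (g : ℤ → ℤ) (M a : ℤ) (h : a < M) :
    ∑ j ∈ Finset.Ioc a M, g j = g (a + 1) + ∑ j ∈ Finset.Ioc (a + 1) M, g j := by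
  rw [show Finset.Ioc a M = insert (a + 1) (Finset.Ioc (a + 1) M) by
        ext x; simp only [Finset.mem_Ioc, Finset.mem_insert]; omega,
      Finset.sum_insert (by simp)]

private lemma cast_high_aux (s : ℤ → ℤ) (σ M : ℤ) (g : ℤ → ℤ)
    (hg : ∀ j, g j = s j * (s (j + 1) - s (j + 2)))
    (hσ1 : 1 ≤ σ)
    (hstair : ∀ i : ℤ, 0 ≤ i → i < σ → s i = i + 1)
    (hσs : s σ ≤ σ)
    (hanti : ∀ i : ℤ, σ ≤ i → s (i + 1) ≤ s i)
    (hpos : ∀ i : ℤ, 0 ≤ s i)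
    (hM : ∀ j, M ≤ j → s j = 0) (hσM : σ ≤ M) :
    ∀ k : ℕ, ∀ m : ℤ, σ ≤ m → m = M + 1 - k →
      s m ^ 2 + s m ≤ 2 * ∑ j ∈ Finset.Ioc (m - 2) M, g j := by
  intro k
  induction k with
  | zero =>
    intro m hσm hm
    have hm' : m = M + 1 := by push_cast at hm; omega
    subst hm'
    have h1 : s (M + 1) = 0 := hM _ (by omega)
    have h2 : Finset.Ioc (M + 1 - 2) M = {M} := by
      ext x; simp only [Finset.mem_Ioc, Finset.mem_singleton]; omega
    rw [h1, h2, Finset.sum_singleton, hg]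
    have := hM (M + 1) (by omega)
    have := hM (M + 2) (by omega)
    simp [this, ‹s (M+1) = 0›]
  | succ k ih =>
    intro m hσm hm
    have hmM : m - 2 < M := by push_cast at hm; omega
    have hIH := ih (m + 1) (by omega) (by push_cast at hm ⊢; omega)
    rw [cast_peel_aux g M (m - 2) hmM]
    have e1 : m - 2 + 1 = m - 1 := by ring
    rw [e1, hg]
    have e2 : m - 1 + 1 = m := by ring
    have e3 : m - 1 + 2 = m + 1 := by ring
    rw [e2, e3]
    rw [show m + 1 - 2 = m - 1 by ring] at hIH
    -- facts
    have hab : s (m + 1) ≤ s m := hanti m hσm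
    have hca : s m ≤ s (m - 1) := by
      rcases eq_or_lt_of_le hσm with h | h
      · have : s (m - 1) = σ := by
          rw [hstair (m - 1) (by omega) (by omega)]; omega
        rw [this, ← h]; exact hσs
      · have := hanti (m - 1) (by omega)
        simpa using this
    have hb0 : 0 ≤ s (m + 1) := hpos _
    have hx : 0 ≤ (s m - s (m + 1)) * (s m - s (m + 1) - 1) := by
      rcases (by omega : s m - s (m + 1) = 0 ∨ 1 ≤ s m - s (m + 1)) with h | h
      · rw [h]; ring_nf; exact le_rfl
      · exact mul_nonneg (by omega) (by omega)
    nlinarith [hIH, hx, mul_nonneg (by omega : (0:ℤ) ≤ s (m - 1) - s m)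
      (by omega : (0:ℤ) ≤ s m - s (m + 1))]

private lemma cast_low_aux (s : ℤ → ℤ) (σ M : ℤ) (g : ℤ → ℤ)
    (hg : ∀ j, g j = s j * (s (j + 1) - s (j + 2)))
    (hσ1 : 1 ≤ σ)
    (hneg : ∀ i : ℤ, i < 0 → s i = 0)
    (hstair : ∀ i : ℤ, 0 ≤ i → i < σ → s i = i + 1)
    (hσs : s σ ≤ σ)
    (hanti : ∀ i : ℤ, σ ≤ i → s (i + 1) ≤ s i)
    (hpos : ∀ i : ℤ, 0 ≤ s i)
    (hM : ∀ j, M ≤ j → s j = 0) (hσM : σ ≤ M) :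
    ∀ k : ℕ, ∀ m : ℤ, 0 ≤ m → m = σ - 1 - k →
      (s σ ^ 2 + s σ + 2 * (σ - 1) * (σ - s σ) - (σ - 2) * (σ - 1)) + m ^ 2 - m
        ≤ 2 * ∑ j ∈ Finset.Ioc (m - 2) M, g j := by
  intro k
  induction k with
  | zero =>
    intro m hm0 hm
    have hm' : m = σ - 1 := by push_cast at hm; omega
    subst hm'
    -- peel g (σ - 2)
    have hpe := cast_peel_aux g M (σ - 1 - 2) (by omega)
    rw [hpe]
    have e1 : σ - 1 - 2 + 1 = σ - 2 := by ring
    rw [e1]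
    -- high part
    have hhigh := cast_high_aux s σ M g hg hσ1 hstair hσs hanti hpos hM hσM
      (M + 1 - σ).toNat σ le_rfl (by omega)
    have hgσ2 : g (σ - 2) = (σ - 1) * (σ - s σ) := by
      rw [hg]
      rcases eq_or_lt_of_le hσ1 with h | h
      · rw [hneg (σ - 2) (by omega)]; nlinarith
      · rw [hstair (σ - 2) (by omega) (by omega),
          show σ - 2 + 1 = σ - 1 by ring, show σ - 2 + 2 = σ by ring,
          hstair (σ - 1) (by omega) (by omega)]
        ring
    rw [hgσ2]
    nlinarith [hhigh]
  | succ k ih =>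
    intro m hm0 hm
    have hmσ : m ≤ σ - 2 := by push_cast at hm; omega
    have hIH := ih (m + 1) (by omega) (by push_cast at hm ⊢; omega)
    have hpe := cast_peel_aux g M (m - 2) (by omega)
    rw [hpe, show m - 2 + 1 = m - 1 by ring]
    rw [show m + 1 - 2 = m - 1 by ring] at hIH
    have hgm : g (m - 1) = -m := by
      rw [hg, show m - 1 + 1 = m by ring, show m - 1 + 2 = m + 1 by ring]
      rcases (by omega : m = 0 ∨ 1 ≤ m) with h | h
      · rw [h, hneg (0 - 1) (by omega)]; ring
      · rw [hstair (m - 1) (by omega) (by omega),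
          hstair m (by omega) (by omega), hstair (m + 1) (by omega) (by omega)]
        ring
    rw [hgm]
    nlinarith [hIH]

theorem castelnuovo_c_lower_bound
    (s : ℤ → ℤ)
    (hfin : (Function.support s).Finite) (hneg : ∀ i : ℤ, i < 0 → s i = 0)
    (hpos : ∀ i : ℤ, 0 ≤ s i)
    (σ : ℤ) (hσ0 : 0 ≤ σ) (hstair : ∀ i : ℤ, 0 ≤ i → i < σ → s i = i + 1)
    (hσs : s σ ≤ σ) (hanti : ∀ i : ℤ, σ ≤ i → s (i + 1) ≤ s i)
    (n : ℤ) (hn : n = ∑ᶠ j : ℤ, s j) (hn2 : 2 ≤ n)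
    (c : ℤ) (hc : c = ∑ᶠ j : ℤ, s j * (s (j + 1) - s (j + 2)))
    (j₀ : ℤ) (hj₀ : σ - 2 ≤ j₀) (hj₀ne : s (j₀ + 1) ≠ s (j₀ + 2))
    (hj₀min : ∀ j : ℤ, σ - 2 ≤ j → j < j₀ → s (j + 1) = s (j + 2))
    (e₁ : ℤ) (he₁ : e₁ = s (j₀ + 1) - s (j₀ + 2))
    (δ : ℤ) (hδ : δ = if s σ < σ then 1 else 0) :
    1 ≤ c ∧ 2 * σ - 1 - δ * e₁ ≤ c ∧
      (c = 1 ↔ ∀ j : ℤ, s j = if 0 ≤ j ∧ j < n then 1 else 0) := by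
  classical
  -- bound on the support
  obtain ⟨m0, hm0⟩ := hfin.bddAbove
  set M : ℤ := max (m0 + 1) σ with hMdef
  have hM : ∀ j : ℤ, M ≤ j → s j = 0 := by
    intro j hj
    by_contra hz
    have h1 : j ≤ m0 := hm0 (Function.mem_support.mpr hz)
    have h2 : m0 + 1 ≤ M := le_max_left _ _
    omega
  have hσM : σ ≤ M := le_max_right _ _
  -- σ ≥ 1
  have hσ1 : 1 ≤ σ := by
    by_contra h
    have hσ : σ = 0 := by omega
    have hz : ∀ j : ℤ, s j = 0 := by
      intro j
      rcases lt_or_ge j 0 with hj | hj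
      · exact hneg j hj
      · have h1 : s j ≤ s 0 := cast_mono_aux s σ hanti 0 j (by omega) hj
        have h2 : s 0 ≤ 0 := by rw [← hσ]; exact hσs
        have := hpos j
        omega
    have : n = 0 := by
      rw [hn, finsum_eq_zero_of_forall_eq_zero hz]
    omega
  set g : ℤ → ℤ := fun j => s j * (s (j + 1) - s (j + 2)) with hgdef
  have hg : ∀ j, g j = s j * (s (j + 1) - s (j + 2)) := fun j => rfl
  -- c as a finite sum
  have hcsum : c = ∑ j ∈ Finset.Ioc (-2 : ℤ) M, g j := by
    rw [hc]
    apply finsum_eq_sum_of_support_subset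
    intro x hx
    have hsx : s x ≠ 0 := by
      intro h
      apply hx
      simp only [Function.mem_support, hg] at hx ⊢
      rw [h]; ring
    have h1 : ¬ x < 0 := fun h => hsx (hneg x h)
    have h2 : ¬ M ≤ x := fun h => hsx (hM x h)
    simp only [Finset.coe_Ioc, Set.mem_Ioc]
    omega
  -- n as a finite sum
  have hnsum : n = ∑ j ∈ Finset.Ioc (-1 : ℤ) M, s j := by
    rw [hn]
    apply finsum_eq_sum_of_support_subset
    intro x hx
    have hsx : s x ≠ 0 := hx
    have h1 : ¬ x < 0 := fun h => hsx (hneg x h)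
    have h2 : ¬ M ≤ x := fun h => hsx (hM x h)
    simp only [Finset.coe_Ioc, Set.mem_Ioc]
    omega
  set t : ℤ := s σ with htdef
  have ht0 : 0 ≤ t := hpos σ
  -- main inequality 2c ≥ A
  have hA : t ^ 2 + t + 2 * (σ - 1) * (σ - t) - (σ - 2) * (σ - 1) ≤ 2 * c := by
    have := cast_low_aux s σ M g hg hσ1 hneg hstair hσs hanti hpos hM hσM
      (σ - 1).toNat 0 le_rfl (by omega)
    rw [show (0:ℤ) - 2 = -2 by ring] at this
    rw [hcsum]
    simpa using this
  -- σ = 1 forces s 1 = 1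
  have ht1 : σ = 1 → t = 1 := by
    intro hσe
    by_contra hne
    have ht0' : t = 0 := by omega
    have hz : ∀ j : ℤ, 1 ≤ j → s j = 0 := by
      intro j hj
      have h1 : s j ≤ s 1 := cast_mono_aux s σ hanti 1 j (by omega) hj
      have h2 : s 1 = 0 := by rw [← hσe]; exact ht0'
      have := hpos j
      omega
    have hs0 : s 0 = 1 := by
      have := hstair 0 le_rfl (by omega); omega
    have : n = 1 := by
      rw [hnsum, Finset.sum_eq_single 0]
      · exact hs0
      · intro b hb hb0
        simp only [Finset.mem_Ioc] at hb
        exact hz b (by omega)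
      · intro h
        exfalso; apply h
        simp only [Finset.mem_Ioc]
        omega
    omega
  -- A ≥ 3 when σ ≥ 2
  have hA3 : 2 ≤ σ → 3 ≤ t ^ 2 + t + 2 * (σ - 1) * (σ - t) - (σ - 2) * (σ - 1) := by
    intro hσ2
    have htσ : t ≤ σ := hσs
    rcases (by omega : t = 0 ∨ 1 ≤ t) with h | h
    · rw [h]; nlinarith
    · nlinarith [sq_nonneg (σ - t)]
  have hc1 : 1 ≤ c := by
    rcases (by omega : σ = 1 ∨ 2 ≤ σ) with h | h
    · have := ht1 h
      rw [h, this] at hA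
      norm_num at hA
      omega
    · have := hA3 h
      omega
  have hc2 : 2 * σ - 1 - δ * e₁ ≤ c := by
    have htσ : t ≤ σ := hσs
    rcases eq_or_lt_of_le htσ with hte | hte
    · -- t = σ : δ = 0
      have hδ0 : δ = 0 := by rw [hδ, if_neg (by omega)]
      rw [hδ0, zero_mul, sub_zero]
      nlinarith [hA]
    · -- t < σ : δ = 1, j₀ = σ - 2, e₁ = σ - t
      have hδ1 : δ = 1 := by rw [hδ, if_pos (by omega)]
      have hj0 : j₀ = σ - 2 := by
        by_contra hne
        have hlt : σ - 2 < j₀ := by omega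
        have := hj₀min (σ - 2) le_rfl hlt
        rw [show σ - 2 + 1 = σ - 1 by ring, show σ - 2 + 2 = σ by ring] at this
        rw [hstair (σ - 1) (by omega) (by omega)] at this
        omega
      have he : e₁ = σ - t := by
        rw [he₁, hj0, show σ - 2 + 1 = σ - 1 by ring, show σ - 2 + 2 = σ by ring,
          hstair (σ - 1) (by omega) (by omega)]
        ring
      rw [hδ1, he, one_mul]
      nlinarith [hA, mul_nonneg (by omega : (0:ℤ) ≤ σ - t - 1) (by omega : (0:ℤ) ≤ σ - t)]
  refine ⟨hc1, hc2, ?_, ?_⟩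
  · -- c = 1 → staircase of ones
    intro hceq
    have hσe : σ = 1 := by
      by_contra h
      have h2 : 2 ≤ σ := by omega
      have := hA3 h2
      omega
    have hte : t = 1 := ht1 hσe
    -- least zero
    obtain ⟨K, ⟨hK1, hK0⟩, hKmin⟩ :=
      Int.exists_least_of_bdd (P := fun j => 1 ≤ j ∧ s j = 0)
        ⟨1, fun z hz => hz.1⟩ ⟨M, by omega, hM M le_rfl⟩
    have hKM : K ≤ M := hKmin M ⟨by omega, hM M le_rfl⟩
    have hs1 : s 1 = 1 := by
      have h := hte
      rw [htdef, hσe] at h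
      exact h
    have hones : ∀ j : ℤ, 0 ≤ j → j < K → s j = 1 := by
      intro j hj0 hjK
      rcases (by omega : j = 0 ∨ 1 ≤ j) with h | h
      · rw [h]; have := hstair 0 le_rfl (by omega); omega
      · have hle : s j ≤ s 1 := cast_mono_aux s σ hanti 1 j (by omega) h
        have hne : s j ≠ 0 := by
          intro hz
          have := hKmin j ⟨h, hz⟩
          omega
        have := hpos j
        omega
    have hzeros : ∀ j : ℤ, K ≤ j → s j = 0 := by
      intro j hj
      have h1 : s j ≤ s K := cast_mono_aux s σ hanti K j (by omega) hj
      have := hpos j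
      omega
    have hnK : n = K := by
      rw [hnsum]
      have hsub : Finset.Ioc (-1 : ℤ) (K - 1) ⊆ Finset.Ioc (-1 : ℤ) M := by
        intro x hx
        simp only [Finset.mem_Ioc] at hx ⊢
        omega
      rw [← Finset.sum_subset hsub (by
        intro x hx hnx
        simp only [Finset.mem_Ioc] at hx hnx
        exact hzeros x (by omega))]
      rw [Finset.sum_congr rfl (fun x hx => by
        simp only [Finset.mem_Ioc] at hx
        exact hones x (by omega) (by omega))]
      rw [Finset.sum_const, Int.card_Ioc]
      simp only [nsmul_eq_mul, mul_one]
      omega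
    intro j
    by_cases hj : 0 ≤ j ∧ j < n
    · rw [if_pos hj]
      exact hones j hj.1 (by omega)
    · rw [if_neg hj]
      rcases (by omega : j < 0 ∨ n ≤ j) with h | h
      · exact hneg j h
      · exact hzeros j (by omega)
  · -- staircase of ones → c = 1
    intro h1
    have hmem : n - 2 ∈ Finset.Ioc (-2 : ℤ) M := by
      have : s (n - 2) = 1 := by rw [h1]; rw [if_pos (by omega)]
      have hlt : ¬ M ≤ n - 2 := by
        intro h
        rw [hM _ h] at this
        omega
      simp only [Finset.mem_Ioc]
      omega
    rw [hcsum, Finset.sum_eq_single (n - 2)]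
    · rw [hg, h1 (n - 2), h1 (n - 2 + 1), h1 (n - 2 + 2)]
      rw [if_pos (by omega), if_pos (by omega), if_neg (by omega)]
      ring
    · intro b hb hbne
      simp only [Finset.mem_Ioc] at hb
      rw [hg, h1 b, h1 (b + 1), h1 (b + 2)]
      split_ifs <;> first | ring1 | (exfalso; omega)
    · intro h
      exact (h hmem).elim
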